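/- Let L̄ be an (n−1)×(n−1) matrix with all eigenvalues of positive real part and Σ the unique solution of L̄Σ + ΣL̄ᵀ = I. Then there exists a skew-symmetric matrix K̄ satisfying L̄K̄ + K̄L̄ᵀ = (1/2)(L̄ − L̄ᵀ), and with this K̄ one has L̄ = (K̄ + (1/2)I) Σ^{-1}. -/

import Mathlib

open Matrix Polynomial

variable {m : ℕ}

lemma eval_charpoly' (A : Matrix (Fin m) (Fin m) ℂ) (μ : ℂ) :
    A.charpoly.eval μ = (μ • (1 : Matrix (Fin m) (Fin m) ℂ) - A).det := by
  rw [Matrix.charpoly, eval_det, matPolyEquiv_charmatrix]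
  congr 1
  ext i j
  simp [Matrix.scalar, Matrix.diagonal, Matrix.one_apply]

lemma mem_spectrum_iff_root (A : Matrix (Fin m) (Fin m) ℂ) (μ : ℂ) :
    μ ∈ spectrum ℂ A ↔ A.charpoly.eval μ = 0 := by
  rw [spectrum.mem_iff, eval_charpoly', Matrix.isUnit_iff_isUnit_det,
    isUnit_iff_ne_zero, not_ne_iff, Algebra.algebraMap_eq_smul_one]

lemma lyap_inj (A : Matrix (Fin m) (Fin m) ℂ)
    (hA : ∀ μ ∈ spectrum ℂ A, 0 < μ.re)
    (D : Matrix (Fin m) (Fin m) ℂ) (hD : A * D + D * Aᵀ = 0) : D = 0 := by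
  have h : A * D = D * (-Aᵀ) := by
    rw [mul_neg]
    exact eq_neg_of_add_eq_zero_left hD
  have hpow : ∀ k : ℕ, A ^ k * D = D * (-Aᵀ) ^ k := by
    intro k
    induction k with
    | zero => simp
    | succ k ih => rw [pow_succ, pow_succ, mul_assoc, h, ← mul_assoc, ih, mul_assoc]
  have hcomm : ∀ p : Polynomial ℂ, (aeval A p) * D = D * (aeval (-Aᵀ) p) := by
    intro p
    induction p using Polynomial.induction_on' with
    | add p q hp hq => simp [map_add, add_mul, mul_add, hp, hq]
    | monomial n a =>
      simp only [aeval_monomial, Algebra.algebraMap_eq_smul_one, smul_mul_assoc, one_mul,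
        mul_smul_comm, hpow]
  have hCH : aeval A A.charpoly = 0 := Matrix.aeval_self_charpoly A
  have h0 : D * aeval (-Aᵀ) A.charpoly = 0 := by rw [← hcomm, hCH, zero_mul]
  have hunit : IsUnit (aeval (-Aᵀ) A.charpoly) := by
    have hsp : A.charpoly = (A.charpoly.roots.map (fun a => X - C a)).prod :=
      (IsAlgClosed.splits _).eq_prod_roots_of_monic A.charpoly_monic
    have hsp' : A.charpoly = (A.charpoly.roots.toList.map (fun a => X - C a)).prod := by
      conv_lhs => rw [hsp, ← Multiset.coe_toList A.charpoly.roots]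
      rw [Multiset.map_coe, Multiset.prod_coe]
    rw [hsp', map_list_prod, List.map_map]
    apply List.prod_isUnit
    intro M hM
    obtain ⟨lam, hlam, rfl⟩ := List.mem_map.mp hM
    have hmem : lam ∈ spectrum ℂ A := by
      rw [mem_spectrum_iff_root]
      exact Polynomial.isRoot_of_mem_roots (Multiset.mem_toList.mp hlam)
    have hnotmem : (-lam) ∉ spectrum ℂ A := by
      intro hc
      have h1 := hA _ hc
      have h2 := hA lam hmem
      simp at h1
      linarith
    have hun : IsUnit ((-lam) • (1 : Matrix (Fin m) (Fin m) ℂ) - A) := by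
      rw [spectrum.mem_iff, not_not, Algebra.algebraMap_eq_smul_one] at hnotmem
      exact hnotmem
    simp only [Function.comp_apply, map_sub, aeval_X, aeval_C,
      Algebra.algebraMap_eq_smul_one]
    have heq : -Aᵀ - lam • (1 : Matrix (Fin m) (Fin m) ℂ) =
        ((-lam) • (1 : Matrix (Fin m) (Fin m) ℂ) - A)ᵀ := by
      rw [Matrix.transpose_sub, Matrix.transpose_smul, Matrix.transpose_one]
      module
    rw [heq, Matrix.isUnit_iff_isUnit_det, Matrix.det_transpose,
      ← Matrix.isUnit_iff_isUnit_det]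
    exact hun
  obtain ⟨u, hu⟩ := hunit
  have h2 : D * ((aeval (-Aᵀ) A.charpoly) * (↑u⁻¹ : Matrix (Fin m) (Fin m) ℂ)) = 0 := by
    rw [← mul_assoc, h0, zero_mul]
  rw [← hu, Units.mul_inv, mul_one] at h2
  exact h2

lemma lyap_inj_real (L : Matrix (Fin m) (Fin m) ℝ)
    (hL : ∀ μ ∈ spectrum ℂ (L.map (Complex.ofReal)), 0 < μ.re)
    (D : Matrix (Fin m) (Fin m) ℝ) (hD : L * D + D * Lᵀ = 0) : D = 0 := by
  have h := lyap_inj (L.map Complex.ofReal) hL (D.map Complex.ofReal) ?_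
  · have : D.map (Complex.ofReal) = (0 : Matrix (Fin m) (Fin m) ℝ).map Complex.ofReal := by
      simpa using h
    exact Matrix.map_injective Complex.ofReal_injective this
  · have hmul : ∀ M N : Matrix (Fin m) (Fin m) ℝ,
        (M * N).map Complex.ofReal = M.map Complex.ofReal * N.map Complex.ofReal := by
      intro M N
      ext i j
      simp [Matrix.mul_apply, Matrix.map_apply]
    have h9 : (L * D + D * Lᵀ).map Complex.ofReal = (0 : Matrix (Fin m) (Fin m) ℝ).map Complex.ofReal := by
      rw [hD]
    rw [Matrix.map_add _ (fun a b => Complex.ofReal_add a b), hmul, hmul, Matrix.transpose_map] at h9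
    simpa using h9

theorem skew_decomposition {m : ℕ} (L : Matrix (Fin m) (Fin m) ℝ)
    (hL : ∀ μ ∈ spectrum ℂ (L.map (Complex.ofReal)), 0 < μ.re)
    (S : Matrix (Fin m) (Fin m) ℝ) (hS : L * S + S * Lᵀ = 1) :
    ∃ K : Matrix (Fin m) (Fin m) ℝ, Kᵀ = -K ∧
      L * K + K * Lᵀ = (1 / 2 : ℝ) • (L - Lᵀ) ∧
      L = (K + (1 / 2 : ℝ) • 1) * S⁻¹ := by
  -- S is symmetric
  have hST : L * Sᵀ + Sᵀ * Lᵀ = 1 := by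
    have := congrArg Matrix.transpose hS
    simpa [Matrix.transpose_add, Matrix.transpose_mul, add_comm] using this
  have hsym : Sᵀ = S := by
    have h0 : L * (S - Sᵀ) + (S - Sᵀ) * Lᵀ = 0 := by
      rw [mul_sub, sub_mul]
      rw [show L * S - L * Sᵀ + (S * Lᵀ - Sᵀ * Lᵀ)
          = (L * S + S * Lᵀ) - (L * Sᵀ + Sᵀ * Lᵀ) by abel, hS, hST, sub_self]
    have := lyap_inj_real L hL _ h0
    rw [sub_eq_zero] at this
    exact this.symm
  -- S is invertible
  have hdet : S.det ≠ 0 := by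
    intro hdet0
    obtain ⟨v, hv, hSv⟩ := (Matrix.exists_mulVec_eq_zero_iff).mpr hdet0
    have h1 : v ⬝ᵥ ((L * S + S * Lᵀ) *ᵥ v) = v ⬝ᵥ v := by rw [hS, Matrix.one_mulVec]
    have h2 : (L * S) *ᵥ v = 0 := by
      rw [← Matrix.mulVec_mulVec, hSv, Matrix.mulVec_zero]
    have h3 : v ⬝ᵥ ((S * Lᵀ) *ᵥ v) = 0 := by
      rw [← Matrix.mulVec_mulVec, Matrix.dotProduct_mulVec, ← hsym,
        Matrix.vecMul_transpose, hSv, zero_dotProduct]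
    rw [Matrix.add_mulVec, dotProduct_add, h2, dotProduct_zero, zero_add, h3] at h1
    exact hv (dotProduct_self_eq_zero.mp h1.symm)
  have hSinv : S * S⁻¹ = 1 := Matrix.mul_nonsing_inv S (isUnit_iff_ne_zero.mpr hdet)
  refine ⟨L * S - (1 / 2 : ℝ) • 1, ?_, ?_, ?_⟩
  · rw [Matrix.transpose_sub, Matrix.transpose_mul, Matrix.transpose_smul,
      Matrix.transpose_one, hsym]
    have hSLT : S * Lᵀ = 1 - L * S := by rw [← hS]; abel
    rw [hSLT]
    module
  · have hL1 : L * (L * S) + (L * S) * Lᵀ = L := by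
      rw [mul_assoc, ← mul_add, hS, mul_one]
    have hY : (L * S) * Lᵀ = L - L * (L * S) := eq_sub_of_add_eq' hL1
    rw [mul_sub, sub_mul, hY, mul_smul_comm, mul_one, smul_mul_assoc, one_mul]
    module
  · rw [sub_add_cancel, mul_assoc, hSinv, mul_one]
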